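/- Let A be a finite subset of a real Hilbert space H with Chebyshev center c and Chebyshev radius r. Then c lies in the convex hull of A ∩ S(c, r), where S(c, r) is the sphere of center c and radius r. -/

import Mathlib

open InnerProductSpace
open scoped RealInnerProductSpace

noncomputable def chebRadius {H : Type*} [NormedAddCommGroup H] (A : Set H) : ℝ :=
  ⨅ y : H, ⨆ x : A, ‖(x : H) - y‖

lemma exists_eq_ciSup_of_finite' {H : Type*} (A : Set H) (hA : A.Nonempty) (hfin : A.Finite)
    (g : H → ℝ) : ∃ x ∈ A, (⨆ y : A, g y) = g x := by
  haveI := hA.to_subtype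
  have h1 : (⨆ y : A, g y) = sSup (g '' A) := by
    rw [iSup, ← Set.image_eq_range]
  obtain ⟨x, hx, hgx⟩ := (hA.image g).csSup_mem (hfin.image g)
  exact ⟨x, hx, by rw [h1, hgx]⟩

theorem stmt11 {H : Type*} [NormedAddCommGroup H] [InnerProductSpace ℝ H] [CompleteSpace H] (A : Set H)
    (hA : A.Nonempty) (hfin : A.Finite) (c : H) (r : ℝ)
    (hr : r = chebRadius A)
    (hc : (⨆ x : A, ‖(x : H) - c‖) = chebRadius A) :
    c ∈ convexHull ℝ (A ∩ Metric.sphere c r) := by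
  classical
  haveI := hA.to_subtype
  by_contra hcon
  set B := A ∩ Metric.sphere c r with hBdef
  -- boundedness of ranges
  haveI := hfin.to_subtype
  have hbdd : ∀ y : H, BddAbove (Set.range fun x : A => ‖(x : H) - y‖) := fun y =>
    (Set.finite_range _).bddAbove
  -- every point of A is within r of c
  have hub : ∀ x ∈ A, ‖x - c‖ ≤ r := by
    intro x hx
    rw [hr, ← hc]
    exact le_ciSup (hbdd c) ⟨x, hx⟩
  -- B is nonempty
  obtain ⟨x₀, hx₀A, hx₀⟩ := exists_eq_ciSup_of_finite' A hA hfin (fun x => ‖x - c‖)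
  have hx₀r : ‖x₀ - c‖ = r := by rw [hr, ← hc, hx₀]
  have hBne : B.Nonempty := ⟨x₀, hx₀A, by
    simpa [Metric.mem_sphere, dist_eq_norm] using hx₀r⟩
  have hBfin : B.Finite := hfin.inter_of_left _
  -- separation
  obtain ⟨f, u, hfc, hfb⟩ := geometric_hahn_banach_point_closed
    (convex_convexHull ℝ B) ((hBfin.isCompact_convexHull (𝕜 := ℝ)).isClosed) hcon
  set v : H := (InnerProductSpace.toDual ℝ H).symm f with hvdef
  have hvy : ∀ y : H, ⟪v, y⟫_ℝ = f y := fun y => InnerProductSpace.toDual_symm_apply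
  set δ : ℝ := u - f c with hδdef
  have hδ : 0 < δ := sub_pos.mpr hfc
  have hsep : ∀ x ∈ B, δ < ⟪v, x - c⟫_ℝ := by
    intro x hx
    have : u < f x := hfb x (subset_convexHull ℝ B hx)
    rw [hvy, map_sub]
    simp only [hδdef]
    linarith
  have hv : 0 < ‖v‖ := by
    obtain ⟨x, hx⟩ := hBne
    have h1 := hsep x hx
    rw [norm_pos_iff]
    intro h
    rw [h, inner_zero_left] at h1
    linarith
  -- for each point of A, small perturbations strictly decrease the distance below r
  have hτ : ∀ x ∈ A, ∃ τ > 0, ∀ t : ℝ, 0 < t → t < τ → ‖x - (c + t • v)‖ < r := by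
    intro x hx
    by_cases hxr : ‖x - c‖ = r
    · refine ⟨2 * δ / ‖v‖ ^ 2, by positivity, ?_⟩
      intro t ht htτ
      have hin : δ < ⟪v, x - c⟫_ℝ := hsep x ⟨hx, by
        simpa [Metric.mem_sphere, dist_eq_norm] using hxr⟩
      have key : ‖x - (c + t • v)‖ ^ 2
          = ‖x - c‖ ^ 2 - 2 * (t * ⟪v, x - c⟫_ℝ) + t ^ 2 * ‖v‖ ^ 2 := by
        have h1 : x - (c + t • v) = (x - c) - t • v := by module
        rw [h1, norm_sub_sq_real, real_inner_smul_right, real_inner_comm (x - c) v,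
          norm_smul, mul_pow, Real.norm_eq_abs, sq_abs]
      have ht2 : t ^ 2 * ‖v‖ ^ 2 < 2 * (t * δ) := by
        have h2 : t * ‖v‖ ^ 2 < 2 * δ :=
          (lt_div_iff₀ (by positivity : (0:ℝ) < ‖v‖ ^ 2)).mp htτ
        nlinarith
      have hsq : ‖x - (c + t • v)‖ ^ 2 < r ^ 2 := by
        rw [key, hxr]
        nlinarith
      nlinarith [norm_nonneg (x - (c + t • v)), hub x hx, norm_nonneg (x - c)]
    · have hlt : ‖x - c‖ < r := lt_of_le_of_ne (hub x hx) hxr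
      refine ⟨(r - ‖x - c‖) / ‖v‖, div_pos (by linarith) hv, ?_⟩
      intro t ht htτ
      have h1 : x - (c + t • v) = (x - c) - t • v := by module
      calc ‖x - (c + t • v)‖ ≤ ‖x - c‖ + ‖t • v‖ := by rw [h1]; exact norm_sub_le _ _
        _ = ‖x - c‖ + t * ‖v‖ := by
            rw [norm_smul, Real.norm_eq_abs, abs_of_pos ht]
        _ < r := by
            have : t * ‖v‖ < r - ‖x - c‖ := (lt_div_iff₀ hv).mp htτ
            linarith
  -- choose a uniform small t
  set s : Finset H := hfin.toFinset with hsdef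
  have hsne : s.Nonempty := hfin.toFinset_nonempty.mpr hA
  set τf : H → ℝ := fun x => if h : x ∈ A then (hτ x h).choose else 1 with hτfdef
  set T : ℝ := s.inf' hsne τf with hTdef
  have hT : 0 < T := by
    rw [hTdef, Finset.lt_inf'_iff]
    intro x hxs
    have hxA : x ∈ A := hfin.mem_toFinset.mp hxs
    simp only [hτfdef, dif_pos hxA]
    exact (hτ x hxA).choose_spec.1
  set t : ℝ := T / 2 with htdef
  have ht : 0 < t := by positivity
  have hall : ∀ x ∈ A, ‖x - (c + t • v)‖ < r := by
    intro x hx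
    have hle : T ≤ τf x := Finset.inf'_le τf (hfin.mem_toFinset.mpr hx)
    have : τf x = (hτ x hx).choose := by simp [hτfdef, dif_pos hx]
    exact (hτ x hx).choose_spec.2 t ht (by rw [← this] at *; linarith)
  -- contradiction with minimality of r
  obtain ⟨x₁, hx₁A, hx₁⟩ := exists_eq_ciSup_of_finite' A hA hfin (fun y => ‖y - (c + t • v)‖)
  have hlow : BddBelow (Set.range fun y : H => ⨆ x : A, ‖(x : H) - y‖) := by
    refine ⟨0, ?_⟩
    rintro z ⟨y, rfl⟩
    obtain ⟨w, hw⟩ := hA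
    exact le_trans (norm_nonneg _) (le_ciSup (hbdd y) ⟨w, hw⟩)
  have h1 : r ≤ ⨆ x : A, ‖(x : H) - (c + t • v)‖ := by
    rw [hr, chebRadius]
    exact ciInf_le hlow (c + t • v)
  rw [hx₁] at h1
  exact absurd (hall x₁ hx₁A) (not_lt.mpr h1)
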